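/- (Moreau decomposition) Let G be a real Hilbert space, g ∈ Γ₀(G), γ > 0, and v ∈ G. Let p be the unique minimizer of u ↦ γ g*(u) + (1/2)‖u − v‖² and let q be the unique minimizer of y ↦ γ⁻¹ g(y) + (1/2)‖y − γ⁻¹v‖². Then p = v − γ q; that is, prox_{γ g*} v = v − γ prox_{γ⁻¹ g}(γ⁻¹ v). -/

import Mathlib

open scoped RealInnerProductSpace

/-- `f` is a proper, convex, lower semicontinuous function with values in `(-∞, +∞]`. -/
def IsProperConvexLsc {H : Type*} [NormedAddCommGroup H] [NormedSpace ℝ H]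
    (f : H → EReal) : Prop :=
  (∀ x, f x ≠ ⊥) ∧ (∃ x, f x ≠ ⊤) ∧
  (∀ x y : H, ∀ a b : ℝ, 0 ≤ a → 0 ≤ b → a + b = 1 →
      f (a • x + b • y) ≤ (a : EReal) * f x + (b : EReal) * f y) ∧
  LowerSemicontinuous f

/-- The Fenchel conjugate `g* : u ↦ sup_y (⟪y, u⟫ - g y)`. -/
noncomputable def fenchel {G : Type*} [NormedAddCommGroup G] [InnerProductSpace ℝ G]
    (g : G → EReal) (u : G) : EReal :=
  ⨆ y : G, ((⟪y, u⟫ : ℝ) : EReal) - g y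

lemma aux_nonneg (A B : ℝ) (hB : 0 ≤ B)
    (h : ∀ t : ℝ, 0 < t → t ≤ 1 → 0 ≤ t * A + t ^ 2 * B) : 0 ≤ A := by
  by_contra hA
  push_neg at hA
  rcases eq_or_lt_of_le hB with hB0 | hB0
  · have := h 1 one_pos le_rfl; nlinarith
  · have hdiv : 0 < -A / (2 * B) := div_pos (neg_pos.mpr hA) (by linarith)
    have ht0 : 0 < min 1 (-A / (2 * B)) := lt_min one_pos hdiv
    have := h _ ht0 (min_le_left _ _)
    have htB : min 1 (-A / (2 * B)) ≤ -A / (2 * B) := min_le_right _ _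
    have h2 : min 1 (-A / (2 * B)) * B ≤ -A / 2 := by
      calc min 1 (-A / (2 * B)) * B ≤ (-A / (2 * B)) * B :=
        mul_le_mul_of_nonneg_right htB hB
      _ = -A / 2 := by field_simp
    nlinarith [mul_pos ht0 (neg_pos.mpr hA)]

/-- Moreau decomposition: if `p = prox_{γ g*} v` and
`q = prox_{γ⁻¹ g}(γ⁻¹ v)`, then `p = v - γ q`. -/
theorem moreau_decomposition
    {G : Type*} [NormedAddCommGroup G] [InnerProductSpace ℝ G] [CompleteSpace G]
    (g : G → EReal) (hg : IsProperConvexLsc g)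
    (γ : ℝ) (hγ : 0 < γ) (v p q : G)
    (hp : ∀ u : G,
      ((γ : ℝ) : EReal) * fenchel g p + (((1 / 2) * ‖p - v‖ ^ 2 : ℝ) : EReal)
        ≤ ((γ : ℝ) : EReal) * fenchel g u + (((1 / 2) * ‖u - v‖ ^ 2 : ℝ) : EReal))
    (hq : ∀ y : G,
      ((γ⁻¹ : ℝ) : EReal) * g q + (((1 / 2) * ‖q - γ⁻¹ • v‖ ^ 2 : ℝ) : EReal)
        ≤ ((γ⁻¹ : ℝ) : EReal) * g y + (((1 / 2) * ‖y - γ⁻¹ • v‖ ^ 2 : ℝ) : EReal)) :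
    p = v - γ • q := by
  obtain ⟨hbot, ⟨y0, hy0⟩, hconv, _⟩ := hg
  have hγi : (0:ℝ) < γ⁻¹ := inv_pos.mpr hγ
  set w : G := γ⁻¹ • v with hw
  -- g q is finite
  have hgy0 : g y0 = ((g y0).toReal : EReal) := (EReal.coe_toReal hy0 (hbot y0)).symm
  set s0 : ℝ := (g y0).toReal with hs0
  have hgq_ne_top : g q ≠ ⊤ := by
    intro h
    have h1 := hq y0
    rw [h, EReal.coe_mul_top_of_pos hγi, EReal.top_add_coe, hgy0,
      ← EReal.coe_mul, ← EReal.coe_add] at h1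
    exact absurd h1 (not_le.mpr (EReal.coe_lt_top _))
  set r : ℝ := (g q).toReal with hr
  have hgq : g q = (r : EReal) := (EReal.coe_toReal hgq_ne_top (hbot q)).symm
  -- subgradient inequality: ∀ y with g y = s, ⟪v - γ•q, y - q⟫ ≤ s - r
  have hsub : ∀ y : G, ∀ s : ℝ, g y = (s : EReal) → ⟪v - γ • q, y - q⟫ ≤ s - r := by
    intro y s hgy
    have key : 0 ≤ γ⁻¹ * (s - r) + ⟪q - w, y - q⟫ := by
      apply aux_nonneg _ ((1/2) * ‖y - q‖ ^ 2) (by positivity)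
      intro t ht0 ht1
      set z : G := (1 - t) • q + t • y with hz
      have hconvz := hconv q y (1 - t) t (by linarith) ht0.le (by ring)
      rw [hgq, hgy, ← EReal.coe_mul, ← EReal.coe_mul, ← EReal.coe_add] at hconvz
      have hz_ne_top : g z ≠ ⊤ :=
        (lt_of_le_of_lt hconvz (EReal.coe_lt_top _)).ne
      have hgz : g z = (((g z).toReal : ℝ) : EReal) :=
        (EReal.coe_toReal hz_ne_top (hbot z)).symm
      set m : ℝ := (g z).toReal with hm
      have hm_le : m ≤ (1 - t) * r + t * s := by
        rw [hgz] at hconvz; exact_mod_cast hconvz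
      have h1 := hq z
      rw [hgq, hgz, ← EReal.coe_mul, ← EReal.coe_mul, ← EReal.coe_add,
        ← EReal.coe_add] at h1
      have h2 : γ⁻¹ * r + 1/2 * ‖q - w‖ ^ 2 ≤ γ⁻¹ * m + 1/2 * ‖z - w‖ ^ 2 := by
        exact_mod_cast h1
      have hzq : z - w = (q - w) + t • (y - q) := by
        rw [hz]; module
      have hnorm : ‖z - w‖ ^ 2
          = ‖q - w‖ ^ 2 + 2 * (t * ⟪q - w, y - q⟫) + t ^ 2 * ‖y - q‖ ^ 2 := by
        rw [hzq, norm_add_sq_real, real_inner_smul_right, norm_smul]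
        simp [mul_pow, sq_abs]
      rw [hnorm] at h2
      nlinarith [mul_le_mul_of_nonneg_left hm_le hγi.le]
    have h3 : γ * (γ⁻¹ * (s - r) + ⟪q - w, y - q⟫) ≤ γ * (γ⁻¹ * (s - r) + ⟪q - w, y - q⟫) + 0 := by linarith
    have hvγ : v - γ • q = γ • (w - q) := by
      rw [hw, smul_sub, smul_smul, mul_inv_cancel₀ hγ.ne', one_smul]
    have : ⟪v - γ • q, y - q⟫ = γ * ⟪w - q, y - q⟫ := by
      rw [hvγ, real_inner_smul_left]
    rw [this]
    have hiq : ⟪w - q, y - q⟫ = - ⟪q - w, y - q⟫ := by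
      rw [← inner_neg_left]; congr 1; abel
    rw [hiq]
    have := mul_le_mul_of_nonneg_left key hγ.le
    rw [mul_add, ← mul_assoc, mul_inv_cancel₀ hγ.ne', one_mul] at this
    linarith
  set p' : G := v - γ • q with hp'
  -- fenchel g p' = ⟪q, p'⟫ - r
  have hfen : fenchel g p' = ((⟪q, p'⟫ - r : ℝ) : EReal) := by
    apply le_antisymm
    · apply iSup_le
      intro y
      rcases eq_or_ne (g y) ⊤ with hy | hy
      · rw [hy, EReal.sub_top]; exact bot_le
      · have hgy : g y = (((g y).toReal : ℝ) : EReal) :=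
          (EReal.coe_toReal hy (hbot y)).symm
        set s : ℝ := (g y).toReal with hs
        have hs' := hsub y s hgy
        rw [hgy, ← EReal.coe_sub]
        apply EReal.coe_le_coe_iff.mpr
        have hinner : ⟪y - q, p'⟫ = ⟪y, p'⟫ - ⟪q, p'⟫ := inner_sub_left _ _ _
        have hc : ⟪p', y - q⟫ = ⟪y - q, p'⟫ := real_inner_comm _ _
        rw [hp'] at hc ⊢
        linarith [hs', hc ▸ hinner]
    · have hle := le_iSup (fun y => ((⟪y, p'⟫ : ℝ) : EReal) - g y) q
      rw [hgq] at hle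
      rw [EReal.coe_sub]
      exact hle
  -- lower bound on fenchel g p
  have hlow : ((⟪q, p⟫ - r : ℝ) : EReal) ≤ fenchel g p := by
    have hle := le_iSup (fun y => ((⟪y, p⟫ : ℝ) : EReal) - g y) q
    rw [hgq] at hle
    rw [EReal.coe_sub]
    exact hle
  -- main inequality
  have h1 := hp p'
  rw [hfen, ← EReal.coe_mul, ← EReal.coe_add] at h1
  have h2 : ((γ * (⟪q, p⟫ - r) + 1/2 * ‖p - v‖ ^ 2 : ℝ) : EReal)
      ≤ ((γ * (⟪q, p'⟫ - r) + 1/2 * ‖p' - v‖ ^ 2 : ℝ) : EReal) := by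
    refine le_trans ?_ h1
    rw [EReal.coe_add, EReal.coe_mul]
    exact add_le_add_left
      (mul_le_mul_of_nonneg_left hlow (by exact_mod_cast hγ.le : (0:EReal) ≤ ((γ:ℝ):EReal))) _
  have h3 : γ * (⟪q, p⟫ - r) + 1/2 * ‖p - v‖ ^ 2
      ≤ γ * (⟪q, p'⟫ - r) + 1/2 * ‖p' - v‖ ^ 2 := by exact_mod_cast h2
  -- conclude p = p'
  have e1 : ⟪q, p'⟫ = ⟪q, v⟫ - γ * ‖q‖ ^ 2 := by
    rw [hp', inner_sub_right, real_inner_smul_right, real_inner_self_eq_norm_sq]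
  have e2 : ‖p' - v‖ ^ 2 = γ ^ 2 * ‖q‖ ^ 2 := by
    have : p' - v = -(γ • q) := by rw [hp']; abel
    rw [this, norm_neg, norm_smul]
    rw [mul_pow, Real.norm_eq_abs, sq_abs]
  have e3 : ‖p - p'‖ ^ 2
      = ‖p - v‖ ^ 2 + 2 * (γ * ⟪p - v, q⟫) + γ ^ 2 * ‖q‖ ^ 2 := by
    have : p - p' = (p - v) + γ • q := by rw [hp']; abel
    rw [this, norm_add_sq_real, real_inner_smul_right, norm_smul]
    rw [mul_pow, Real.norm_eq_abs, sq_abs]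
  have e4 : ⟪p - v, q⟫ = ⟪q, p⟫ - ⟪q, v⟫ := by
    rw [inner_sub_left, real_inner_comm p q, real_inner_comm v q]
  have hle0 : ‖p - p'‖ ^ 2 ≤ 0 := by
    rw [e3, e4]
    rw [e1, e2] at h3
    nlinarith
  have : p - p' = 0 := by
    have := le_antisymm hle0 (sq_nonneg _)
    have hn : ‖p - p'‖ = 0 := by
      nlinarith [norm_nonneg (p - p')]
    exact norm_eq_zero.mp hn
  have := sub_eq_zero.mp this
  rw [this, hp']
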